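/- The elliptic fake degree of the sign character of S_n equals (1-q)^n / (1 - q^n); that is, ((q-1)^{n-1}/n!) Σ_{w∈S_n} sgn(w)·det_E(1-w)/det_E(1-qw) = (1-q)^n/(1-q^n). -/

import Mathlib

set_option maxHeartbeats 1000000
set_option synthInstance.maxHeartbeats 400000

/-!
STATEMENT 3: setup as in the other S_n files: E is the standard reflection
representation of S_n over K = ℚ(q).  The statement asserts that the elliptic fake
degree of the sign character equals (1-q)^n/(1-q^n).
-/

open scoped BigOperators
open Polynomial
open Fin.NatCast
open Fin.CommRing

noncomputable section

/-- The field `ℚ(q)` of rational functions. -/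
abbrev K : Type := RatFunc ℚ

/-- The sum-of-coordinates linear functional on `K^n`. -/
def sumCoords (n : ℕ) : (Fin n → K) →ₗ[K] K :=
  ∑ i : Fin n, LinearMap.proj i

/-- The standard (reflection) representation `E = {x ∈ K^n : Σ x_i = 0}` of `S_n`. -/
def Esub (n : ℕ) : Submodule K (Fin n → K) := LinearMap.ker (sumCoords n)

/-- The permutation action of `w ∈ S_n` on `K^n`. -/
def permL (n : ℕ) (w : Equiv.Perm (Fin n)) : (Fin n → K) →ₗ[K] (Fin n → K) :=
  LinearMap.funLeft K K w

lemma permL_mem (n : ℕ) (w : Equiv.Perm (Fin n)) (x : Fin n → K) (hx : x ∈ Esub n) :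
    permL n w x ∈ Esub n := by
  simp only [Esub, LinearMap.mem_ker, sumCoords, LinearMap.sum_apply, LinearMap.proj_apply,
    permL, LinearMap.funLeft_apply] at hx ⊢
  rw [← hx]
  exact Fintype.sum_equiv w _ _ (fun i => rfl)

/-- The action of `w` restricted to the reflection representation `E`. -/
def permE (n : ℕ) (w : Equiv.Perm (Fin n)) : Esub n →ₗ[K] Esub n :=
  (permL n w).restrict (fun x hx => permL_mem n w x hx)

/-- `det_E(1 - q w)`. -/
def detE (n : ℕ) (q : K) (w : Equiv.Perm (Fin n)) : K :=
  LinearMap.det ((LinearMap.id : Esub n →ₗ[K] Esub n) - q • permE n w)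


/-- The sign character of `S_n`, valued in `K = ℚ(q)`. -/
def sgnChar (n : ℕ) : Equiv.Perm (Fin n) → K := fun w => ((Equiv.Perm.sign w : ℤ) : K)

-- ===== auxiliary lemmas =====

lemma mem_Esub {n : ℕ} (x : Fin n → K) : x ∈ Esub n ↔ ∑ i, x i = 0 := by
  simp [Esub, LinearMap.mem_ker, sumCoords]

lemma permE_coe {n : ℕ} (w : Equiv.Perm (Fin n)) (x : Esub n) :
    ((permE n w x : Fin n → K)) = fun j => (x : Fin n → K) (w j) := rfl

lemma permE_mul {n : ℕ} (a b : Equiv.Perm (Fin n)) :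
    permE n (a * b) = (permE n b).comp (permE n a) := by
  ext x j
  rfl

lemma permE_one {n : ℕ} : permE n 1 = LinearMap.id := by
  ext x j; rfl

lemma permE_pow {n : ℕ} (w : Equiv.Perm (Fin n)) (k : ℕ) :
    (permE n w) ^ k = permE n (w ^ k) := by
  induction k with
  | zero => rw [pow_zero, pow_zero, permE_one]; rfl
  | succ k ih =>
      rw [pow_succ', Module.End.mul_eq_comp, ih, ← permE_mul, ← pow_succ]

lemma detE_conj {n : ℕ} (q : K) (g w : Equiv.Perm (Fin n)) :
    detE n q (g * w * g⁻¹) = detE n q w := by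
  have h1 : (permE n g⁻¹).comp (permE n g) = LinearMap.id := by
    rw [← permE_mul, mul_inv_cancel, permE_one]
  have h2 : (permE n g).comp (permE n g⁻¹) = LinearMap.id := by
    rw [← permE_mul, inv_mul_cancel, permE_one]
  have key : (LinearMap.id : Esub n →ₗ[K] Esub n) - q • permE n (g * w * g⁻¹)
      = (permE n g⁻¹).comp (((LinearMap.id : Esub n →ₗ[K] Esub n) - q • permE n w).comp
          (permE n g)) := by
    have : permE n (g * w * g⁻¹)
        = (permE n g⁻¹).comp ((permE n w).comp (permE n g)) := by
      rw [permE_mul (g * w) g⁻¹, permE_mul g w]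
    ext x j
    simp [this, permE_coe, Equiv.Perm.mul_apply]
  unfold detE
  rw [key, LinearMap.det_comp, LinearMap.det_comp]
  have : LinearMap.det (permE n g⁻¹) * LinearMap.det (permE n g) = 1 := by
    rw [← LinearMap.det_comp, h1, LinearMap.det_id]
  ring_nf
  calc LinearMap.det (permE n g⁻¹) *
        LinearMap.det (LinearMap.id - q • permE n w) * LinearMap.det (permE n g)
      = (LinearMap.det (permE n g⁻¹) * LinearMap.det (permE n g)) *
        LinearMap.det (LinearMap.id - q • permE n w) := by ring
    _ = LinearMap.det (LinearMap.id - q • permE n w) := by rw [this, one_mul]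

lemma finrank_Esub {n : ℕ} (hn : 1 ≤ n) : Module.finrank K (Esub n) = n - 1 := by
  have hsurj : Function.Surjective (sumCoords n) := by
    intro c
    refine ⟨Pi.single ⟨0, hn⟩ c, ?_⟩
    simp [sumCoords, Pi.single_apply]
  have hrange : LinearMap.range (sumCoords n) = ⊤ := LinearMap.range_eq_top.2 hsurj
  have h := LinearMap.finrank_range_add_finrank_ker (sumCoords n)
  rw [hrange] at h
  simp only [finrank_top, Module.finrank_self, Module.finrank_pi, Fintype.card_fin] at h
  have he : Module.finrank K (Esub n) = Module.finrank K (LinearMap.ker (sumCoords n)) := rfl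
  rw [he]; omega

-- ===== determinant vs charpoly evaluation =====

lemma matrix_eval_charpoly {ι : Type} [Fintype ι] [DecidableEq ι]
    (M : Matrix ι ι K) (t : K) :
    M.charpoly.eval t = (t • (1 : Matrix ι ι K) - M).det := by
  have : M.charpoly.eval t = (Polynomial.evalRingHom t) (M.charmatrix.det) := rfl
  rw [this, RingHom.map_det]
  congr 1
  ext i j
  by_cases h : i = j
  · subst h
    simp [Matrix.charmatrix_apply_eq, Matrix.one_apply, Matrix.smul_apply]
  · simp [Matrix.charmatrix_apply_ne _ _ _ h, Matrix.one_apply, h, Matrix.smul_apply]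

lemma det_smul_id_sub {M : Type} [AddCommGroup M] [Module K M] [FiniteDimensional K M]
    (f : M →ₗ[K] M) (t : K) :
    LinearMap.det (t • (LinearMap.id : M →ₗ[K] M) - f) = f.charpoly.eval t := by
  classical
  set b := Module.finBasis K M
  rw [← LinearMap.charpoly_toMatrix f b, matrix_eval_charpoly]
  rw [← LinearMap.det_toMatrix b]
  congr 1
  rw [map_sub, map_smul, LinearMap.toMatrix_id]

-- ===== rotation facts =====

lemma rot_pow (m : ℕ) (k : ℕ) (i : Fin (m+1)) :
    ((finRotate (m+1)) ^ k) i = i + (k : Fin (m+1)) := by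
  induction k with
  | zero => simp
  | succ k ih =>
      rw [pow_succ', Equiv.Perm.mul_apply, finRotate_succ_apply, ih]
      push_cast
      ring

lemma sum_permE_rot_pow (m : ℕ) :
    ∑ i ∈ Finset.range (m+1), (permE (m+1) (finRotate (m+1))) ^ i = 0 := by
  apply LinearMap.ext
  intro x
  have hx := (mem_Esub (x : Fin (m+1) → K)).1 x.2
  rw [LinearMap.zero_apply]
  apply Subtype.ext
  show ((∑ i ∈ Finset.range (m+1), (permE (m+1) (finRotate (m+1))) ^ i) x : Fin (m+1) → K) = 0
  have : ((∑ i ∈ Finset.range (m+1), (permE (m+1) (finRotate (m+1))) ^ i) x : Fin (m+1) → K)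
      = ∑ i ∈ Finset.range (m+1), ((((permE (m+1) (finRotate (m+1))) ^ i) x : Fin (m+1) → K)) := by
    rw [LinearMap.coe_sum, Finset.sum_apply]
    exact Submodule.coe_sum _ _ _
  rw [this]
  funext j
  rw [Finset.sum_apply]
  have hterm : ∀ i ∈ Finset.range (m+1),
      ((((permE (m+1) (finRotate (m+1))) ^ i) x : Fin (m+1) → K)) j
        = (x : Fin (m+1) → K) (j + (i : Fin (m+1))) := by
    intro i _
    rw [permE_pow, permE_coe]
    simp [rot_pow]
  rw [Finset.sum_congr rfl hterm]
  have : ∑ i ∈ Finset.range (m+1), (x : Fin (m+1) → K) (j + (i : Fin (m+1)))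
      = ∑ i : Fin (m+1), (x : Fin (m+1) → K) (j + i) := by
    rw [← Fin.sum_univ_eq_sum_range (fun i => (x : Fin (m+1) → K) (j + (i : Fin (m+1))))]
    apply Finset.sum_congr rfl
    intro i _
    rw [Fin.cast_val_eq_self]
  rw [this]
  have : ∑ i : Fin (m+1), (x : Fin (m+1) → K) (j + i) = ∑ i : Fin (m+1), (x : Fin (m+1) → K) i :=
    Fintype.sum_equiv (Equiv.addLeft j) _ _ (fun i => rfl)
  rw [this, hx]
  rfl

-- ===== independence family =====

def vzero (m : ℕ) : Fin (m+1) → K :=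
  fun j => (if j = 0 then 1 else 0) - (if j = -1 then 1 else 0)

lemma vzero_mem (m : ℕ) : vzero m ∈ Esub (m+1) := by
  rw [mem_Esub]
  unfold vzero
  rw [Finset.sum_sub_distrib]
  simp

def vbar (m : ℕ) : Esub (m+1) := ⟨vzero m, vzero_mem m⟩

def Ufam (m : ℕ) : Fin m → Esub (m+1) :=
  fun i => ((permE (m+1) (finRotate (m+1))) ^ (i.val)) (vbar m)

lemma Ufam_coe (m : ℕ) (i : Fin m) :
    ((Ufam m i : Fin (m+1) → K)) = fun j => vzero m (j + (i.val : Fin (m+1))) := by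
  unfold Ufam
  rw [permE_pow, permE_coe]
  funext j
  simp only [rot_pow]
  rfl

def Gmap (m : ℕ) : (Fin (m+1) → K) →ₗ[K] (Fin m → K) :=
  LinearMap.pi (fun t : Fin m => ∑ k ∈ Finset.range (t.val+1),
    LinearMap.proj (-(k : Fin (m+1))))

lemma Gmap_apply (m : ℕ) (x : Fin (m+1) → K) (t : Fin m) :
    Gmap m x t = ∑ k ∈ Finset.range (t.val+1), x (-(k : Fin (m+1))) := by
  unfold Gmap
  rw [LinearMap.pi_apply, LinearMap.sum_apply]
  rfl

lemma G_Ufam (m : ℕ) (i : Fin m) : Gmap m ((Ufam m i : Fin (m+1) → K)) = Pi.single i 1 := by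
  funext t
  rw [Gmap_apply, Ufam_coe]
  have hterm : ∀ k ∈ Finset.range (t.val+1),
      vzero m ((-(k : Fin (m+1))) + (i.val : Fin (m+1)))
        = (if k = i.val then (1:K) else 0) - (if k = i.val + 1 then (1:K) else 0) := by
    intro k hk
    rw [Finset.mem_range] at hk
    have hk1 : k < m + 1 := by omega
    have hi1 : i.val < m + 1 := by omega
    have hi2 : i.val + 1 < m + 1 := by omega
    unfold vzero
    congr 1
    · congr 1
      simp only [eq_iff_iff]
      rw [neg_add_eq_zero]
      constructor
      · intro h
        have := congrArg Fin.val h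
        rwa [Fin.val_cast_of_lt hk1, Fin.val_cast_of_lt hi1] at this
      · intro h; rw [h]
    · congr 1
      simp only [eq_iff_iff]
      have : ((-(k : Fin (m+1))) + (i.val : Fin (m+1)) = -1)
          ↔ ((k : Fin (m+1)) = (i.val : Fin (m+1)) + 1) := by
        constructor
        · intro h
          linear_combination -h
        · intro h
          linear_combination -h
      rw [this]
      constructor
      · intro h
        have := congrArg Fin.val h
        rw [Fin.val_cast_of_lt hk1] at this
        rw [show ((i.val : Fin (m+1)) + 1) = ((i.val + 1 : ℕ) : Fin (m+1)) by push_cast; ring] at h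
        have := congrArg Fin.val h
        rwa [Fin.val_cast_of_lt hk1, Fin.val_cast_of_lt hi2] at this
      · intro h
        rw [h]
        push_cast
        ring
  rw [Finset.sum_congr rfl hterm, Finset.sum_sub_distrib]
  rw [Finset.sum_ite_eq' (Finset.range (t.val+1)) i.val (fun _ => (1:K)),
      Finset.sum_ite_eq' (Finset.range (t.val+1)) (i.val+1) (fun _ => (1:K))]
  simp only [Finset.mem_range]
  rcases lt_trichotomy i.val t.val with h | h | h
  · rw [if_pos (by omega), if_pos (by omega), Pi.single_apply, if_neg (by
      intro hc; exact absurd (congrArg Fin.val hc) (by omega))]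
    ring
  · have hti : t = i := Fin.ext h.symm
    rw [if_pos (by omega), if_neg (by omega), Pi.single_apply, if_pos hti]
    ring
  · rw [if_neg (by omega), if_neg (by omega), Pi.single_apply, if_neg (by
      intro hc; exact absurd (congrArg Fin.val hc) (by omega))]
    ring

lemma linIndep_Ufam (m : ℕ) : LinearIndependent K (Ufam m) := by
  classical
  apply LinearIndependent.of_comp ((Gmap m).comp (Esub (m+1)).subtype)
  have hcomp : (⇑((Gmap m).comp (Esub (m+1)).subtype)) ∘ (Ufam m)
      = fun i : Fin m => (Pi.single i 1 : Fin m → K) := by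
    funext i
    simp only [Function.comp_apply, LinearMap.comp_apply, Submodule.coe_subtype]
    exact G_Ufam m i
  rw [hcomp]
  have h2 := (Pi.basisFun K (Fin m)).linearIndependent
  have h3 : ⇑(Pi.basisFun K (Fin m)) = fun i : Fin m => (Pi.single i 1 : Fin m → K) :=
    funext fun i => by simp
  rwa [h3] at h2

lemma annih (m : ℕ) (r : K[X]) (hr : r.natDegree < m)
    (h0 : Polynomial.aeval (permE (m+1) (finRotate (m+1))) r = 0) : r = 0 := by
  set σ := permE (m+1) (finRotate (m+1)) with hσ
  have hsum : Polynomial.aeval σ r = ∑ i ∈ Finset.range m, r.coeff i • σ ^ i :=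
    Polynomial.aeval_eq_sum_range' hr σ
  have happ : ∑ i ∈ Finset.range m, r.coeff i • (σ ^ i) (vbar m) = 0 := by
    have := congrArg (fun f => f (vbar m)) (hsum.symm.trans h0)
    simp only [LinearMap.zero_apply] at this
    rw [← this]
    rw [LinearMap.coe_sum, Finset.sum_apply]
    apply Finset.sum_congr rfl
    intro i _
    rfl
  have hfin : ∑ i : Fin m, r.coeff i.val • Ufam m i = 0 := by
    rw [← happ, ← Fin.sum_univ_eq_sum_range (fun i => r.coeff i • (σ ^ i) (vbar m))]
    exact Finset.sum_congr rfl (fun i _ => rfl)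
  have hcoeff := Fintype.linearIndependent_iff.1 (linIndep_Ufam m) (fun i => r.coeff i.val) hfin
  ext k
  rcases lt_or_ge k m with hk | hk
  · simpa using hcoeff ⟨k, hk⟩
  · simp [Polynomial.coeff_eq_zero_of_natDegree_lt (lt_of_lt_of_le hr hk)]

lemma geom_natDegree (m : ℕ) :
    (∑ i ∈ Finset.range (m+1), (X : K[X]) ^ i).natDegree = m := by
  apply le_antisymm
  · apply Polynomial.natDegree_sum_le_of_forall_le
    intro i hi
    rw [Polynomial.natDegree_X_pow]
    exact Nat.lt_succ_iff.mp (Finset.mem_range.mp hi)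
  · apply Polynomial.le_natDegree_of_ne_zero
    simp [Polynomial.finset_sum_coeff, Polynomial.coeff_X_pow]

lemma charpoly_rot (m : ℕ) :
    (permE (m+1) (finRotate (m+1))).charpoly = ∑ i ∈ Finset.range (m+1), (X : K[X]) ^ i := by
  set σ := permE (m+1) (finRotate (m+1)) with hσ
  set p : K[X] := ∑ i ∈ Finset.range (m+1), (X : K[X]) ^ i with hp
  have hpm : p.Monic := Polynomial.monic_geom_sum_X (Nat.succ_ne_zero m)
  have hpd : p.natDegree = m := geom_natDegree m
  have hcd : σ.charpoly.natDegree = m := by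
    rw [LinearMap.charpoly_natDegree, finrank_Esub (by omega)]
    omega
  have hcm : σ.charpoly.Monic := LinearMap.charpoly_monic σ
  have haevp : Polynomial.aeval σ p = 0 := by
    rw [hp]
    rw [map_sum]
    simp only [map_pow, Polynomial.aeval_X]
    exact sum_permE_rot_pow m
  by_contra hne
  have hd : (σ.charpoly - p).natDegree < m := by
    have hdeq : σ.charpoly.degree = p.degree := by
      rw [Polynomial.degree_eq_natDegree hcm.ne_zero,
        Polynomial.degree_eq_natDegree hpm.ne_zero, hcd, hpd]
    have h1 : (σ.charpoly - p).degree < σ.charpoly.degree :=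
      Polynomial.degree_sub_lt hdeq hcm.ne_zero
        (by rw [hcm.leadingCoeff, hpm.leadingCoeff])
    have hne2 : σ.charpoly - p ≠ 0 := sub_ne_zero.mpr hne
    rw [Polynomial.degree_eq_natDegree hcm.ne_zero, hcd] at h1
    exact (Polynomial.natDegree_lt_iff_degree_lt hne2).mpr h1
  have := annih m (σ.charpoly - p) hd (by
    rw [map_sub, LinearMap.aeval_self_charpoly, haevp, sub_self])
  exact hne (sub_eq_zero.mp this)

-- ===== detE values on the rotation =====

lemma detE_rot_one (m : ℕ) : detE (m+1) 1 (finRotate (m+1)) = ((m+1 : ℕ) : K) := by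
  unfold detE
  have h1 : (LinearMap.id : Esub (m+1) →ₗ[K] Esub (m+1)) - (1:K) • permE (m+1) (finRotate (m+1))
      = (1:K) • (LinearMap.id : Esub (m+1) →ₗ[K] Esub (m+1)) - permE (m+1) (finRotate (m+1)) := by
    rw [one_smul, one_smul]
  rw [h1, det_smul_id_sub, charpoly_rot, eval_geom_sum]
  simp

lemma detE_rot_X (m : ℕ) :
    detE (m+1) RatFunc.X (finRotate (m+1)) = ∑ i ∈ Finset.range (m+1), (RatFunc.X : K) ^ i := by
  unfold detE
  have hX : (RatFunc.X : K) ≠ 0 := RatFunc.X_ne_zero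
  set σ := permE (m+1) (finRotate (m+1)) with hσ
  have key : (LinearMap.id : Esub (m+1) →ₗ[K] Esub (m+1)) - (RatFunc.X : K) • σ
      = (RatFunc.X : K) • (((RatFunc.X : K)⁻¹ • (LinearMap.id : Esub (m+1) →ₗ[K] Esub (m+1))) - σ) := by
    apply LinearMap.ext
    intro x
    simp only [LinearMap.sub_apply, LinearMap.smul_apply, LinearMap.id_apply, smul_sub,
      smul_smul, mul_inv_cancel₀ hX, one_smul]
  rw [key, LinearMap.det_smul, det_smul_id_sub, charpoly_rot, eval_geom_sum]
  rw [show Module.finrank K (Esub (m+1)) = m from by rw [finrank_Esub (by omega)]; omega]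
  rw [Finset.mul_sum]
  have hterm : ∀ i ∈ Finset.range (m+1),
      (RatFunc.X : K) ^ m * ((RatFunc.X : K)⁻¹) ^ i = (RatFunc.X : K) ^ (m - i) := by
    intro i hi
    rw [Finset.mem_range] at hi
    have : (RatFunc.X : K) ^ m = (RatFunc.X : K) ^ (m - i) * (RatFunc.X : K) ^ i := by
      rw [← pow_add]
      congr 1
      omega
    rw [this, mul_assoc, ← mul_pow, mul_inv_cancel₀ hX, one_pow, mul_one]
  rw [Finset.sum_congr rfl hterm]
  have := Finset.sum_range_reflect (fun i => (RatFunc.X : K) ^ i) (m+1)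
  simpa using this

-- ===== vanishing for non-(n)-cycles =====

lemma detE_one_zero (m : ℕ) (w : Equiv.Perm (Fin (m+1))) (j0 : Fin (m+1))
    (hj : ¬ w.SameCycle 0 j0) : detE (m+1) 1 w = 0 := by
  classical
  set S := Finset.univ.filter (fun j => w.SameCycle 0 j) with hS
  set a : K := (S.card : K) with ha
  set v : Fin (m+1) → K := fun j => (if w.SameCycle 0 j then (((m+1) : ℕ) : K) else 0) - a with hv
  have hvmem : v ∈ Esub (m+1) := by
    rw [mem_Esub]
    simp only [hv]
    rw [Finset.sum_sub_distrib, ← Finset.sum_filter, ← hS, Finset.sum_const, Finset.sum_const]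
    simp only [nsmul_eq_mul, Finset.card_univ, Fintype.card_fin, ha]
    push_cast
    ring
  have hfix : permE (m+1) w ⟨v, hvmem⟩ = ⟨v, hvmem⟩ := by
    apply Subtype.ext
    rw [permE_coe]
    funext j
    have hiff : w.SameCycle 0 (w j) ↔ w.SameCycle 0 j := Equiv.Perm.sameCycle_apply_right
    simp only [hv, hiff]
  have hcard : S.card < m+1 := by
    have hss : S ⊂ Finset.univ := by
      constructor
      · exact Finset.subset_univ S
      · intro hsub
        exact hj (by simpa [hS] using hsub (Finset.mem_univ j0))
    have := Finset.card_lt_card hss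
    simpa [Finset.card_univ, Fintype.card_fin] using this
  haveI : CharZero K := charZero_of_injective_algebraMap (algebraMap ℚ K).injective
  have hvne : v ≠ 0 := by
    intro h0
    have := congrFun h0 0
    simp only [hv, Pi.zero_apply] at this
    rw [if_pos (Equiv.Perm.SameCycle.refl w 0)] at this
    have h2 : (((m+1 : ℕ)) : K) = a := sub_eq_zero.mp this
    rw [ha, Nat.cast_inj] at h2
    omega
  set f : Esub (m+1) →ₗ[K] Esub (m+1) := LinearMap.id - (1:K) • permE (m+1) w with hf
  show LinearMap.det f = 0
  by_contra hdet
  have hinj : Function.Injective f := by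
    have h1 := (LinearMap.equivOfDetNeZero f hdet).injective
    have h2 : ⇑(LinearMap.equivOfDetNeZero f hdet) = ⇑f := by
      funext x; rfl
    rwa [h2] at h1
  have hker : f ⟨v, hvmem⟩ = 0 := by
    rw [hf]
    simp only [LinearMap.sub_apply, LinearMap.smul_apply, LinearMap.id_apply, one_smul, hfix,
      sub_self]
  have : (⟨v, hvmem⟩ : Esub (m+1)) = 0 := hinj (by rw [hker, map_zero])
  exact hvne (congrArg (fun (z : Esub (m+1)) => (z : Fin (m+1) → K)) this)

-- ===== conjugation to the rotation =====

lemma inv_zero_fix {m : ℕ} {u : Equiv.Perm (Fin (m+1))} (hu : u 0 = 0) : u⁻¹ 0 = 0 := by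
  apply u.injective
  rw [show u (u⁻¹ 0) = 0 from Equiv.apply_symm_apply u 0, hu]

lemma conj_rot_pow_zero (m : ℕ) (u : Equiv.Perm (Fin (m+1))) (hu : u 0 = 0) (t : ℕ) :
    ((u * finRotate (m+1) * u⁻¹) ^ t) 0 = u (((finRotate (m+1)) ^ t) 0) := by
  rw [conj_pow]
  simp only [Equiv.Perm.mul_apply]
  rw [inv_zero_fix hu]

lemma sameCycle_conj_rot (m : ℕ) (u : Equiv.Perm (Fin (m+1))) (hu : u 0 = 0) (j : Fin (m+1)) :
    (u * finRotate (m+1) * u⁻¹).SameCycle 0 j := by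
  refine ⟨((u⁻¹ j).val : ℤ), ?_⟩
  rw [zpow_natCast, conj_rot_pow_zero m u hu, rot_pow, zero_add, Fin.cast_val_eq_self]
  exact Equiv.apply_symm_apply u j

lemma conj_rot_inj (m : ℕ) {u u' : Equiv.Perm (Fin (m+1))} (hu : u 0 = 0) (hu' : u' 0 = 0)
    (h : u * finRotate (m+1) * u⁻¹ = u' * finRotate (m+1) * u'⁻¹) : u = u' := by
  apply Equiv.ext
  intro j
  have hj : ((finRotate (m+1)) ^ (j.val)) 0 = j := by
    rw [rot_pow, zero_add, Fin.cast_val_eq_self]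
  calc u j = u (((finRotate (m+1)) ^ (j.val)) 0) := by rw [hj]
    _ = ((u * finRotate (m+1) * u⁻¹) ^ (j.val)) 0 := (conj_rot_pow_zero m u hu j.val).symm
    _ = ((u' * finRotate (m+1) * u'⁻¹) ^ (j.val)) 0 := by rw [h]
    _ = u' (((finRotate (m+1)) ^ (j.val)) 0) := conj_rot_pow_zero m u' hu' j.val
    _ = u' j := by rw [hj]

lemma pow_mod_fix {m : ℕ} (w : Equiv.Perm (Fin (m+1))) {d : ℕ} (hd : (w ^ d) 0 = 0) (z : ℕ) :
    (w ^ (z % d)) 0 = (w ^ z) 0 := by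
  conv_rhs => rw [← Nat.mod_add_div z d]
  rw [pow_add, Equiv.Perm.mul_apply, pow_mul]
  rw [Equiv.Perm.pow_apply_eq_self_of_apply_eq_self hd]

lemma zpow_emod_fix {m : ℕ} (w : Equiv.Perm (Fin (m+1))) {d : ℕ} (hd0 : 0 < d)
    (hd : (w ^ d) 0 = 0) (z : ℤ) : (w ^ z) 0 = (w ^ (z % (d : ℤ)).toNat) 0 := by
  have hmod : z = z % (d : ℤ) + (d : ℤ) * (z / (d : ℤ)) := by linarith [Int.emod_add_mul_ediv z d]
  conv_lhs => rw [hmod]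
  rw [zpow_add, Equiv.Perm.mul_apply, zpow_mul]
  have hfix : ((w ^ (d : ℤ)) ^ (z / (d : ℤ))) 0 = 0 := by
    apply Equiv.Perm.zpow_apply_eq_self_of_apply_eq_self
    rw [zpow_natCast]
    exact hd
  rw [hfix]
  congr 1
  rw [← zpow_natCast]
  congr 1
  exact (Int.toNat_of_nonneg (Int.emod_nonneg z (by exact_mod_cast hd0.ne'))).symm

lemma no_small_period {m : ℕ} (w : Equiv.Perm (Fin (m+1)))
    (hw : ∀ j, w.SameCycle 0 j) {d : ℕ} (hd0 : 0 < d) (hdm : d < m + 1) :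
    (w ^ d) 0 ≠ 0 := by
  intro hd
  have hcover : (Finset.univ : Finset (Fin (m+1))) ⊆
      (Finset.range d).image (fun i => (w ^ i) 0) := by
    intro j _
    obtain ⟨z, hz⟩ := hw j
    rw [zpow_emod_fix w hd0 hd z] at hz
    apply Finset.mem_image.2
    refine ⟨(z % (d : ℤ)).toNat, ?_, hz⟩
    rw [Finset.mem_range]
    have := Int.emod_lt_of_pos z (by exact_mod_cast hd0 : (0:ℤ) < (d:ℤ))
    omega
  have h1 := Finset.card_le_card hcover
  have h2 := Finset.card_image_le (s := Finset.range d) (f := fun i => (w ^ i) 0)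
  rw [Finset.card_univ, Fintype.card_fin, Finset.card_range] at *
  omega

lemma exists_conj (m : ℕ) (w : Equiv.Perm (Fin (m+1))) (hw : ∀ j, w.SameCycle 0 j) :
    ∃ u : Equiv.Perm (Fin (m+1)), u 0 = 0 ∧ u * finRotate (m+1) * u⁻¹ = w := by
  classical
  set f : Fin (m+1) → Fin (m+1) := fun k => (w ^ (k.val)) 0 with hfdef
  have key : ∀ a b : Fin (m+1), f a = f b → a.val < b.val → False := by
    intro a b hab hlt
    have hfix : (w ^ (b.val - a.val)) 0 = 0 := by
      have hsplit : (w ^ (b.val)) 0 = (w ^ (b.val - a.val)) ((w ^ (a.val)) 0) := by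
        rw [← Equiv.Perm.mul_apply, ← pow_add]
        congr 2
        omega
      have hba : (w ^ (a.val)) 0 = (w ^ (b.val)) 0 := hab
      rw [hsplit] at hba
      have hcomm : (w ^ (b.val - a.val)) ((w ^ (a.val)) 0)
          = (w ^ (a.val)) ((w ^ (b.val - a.val)) 0) := by
        rw [← Equiv.Perm.mul_apply, ← Equiv.Perm.mul_apply, ← pow_add, ← pow_add]
        have he : b.val - a.val + a.val = a.val + (b.val - a.val) := by omega
        rw [he]
      rw [hcomm] at hba
      exact (Equiv.injective _) hba.symm
    exact no_small_period w hw (by omega) (by omega) hfix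
  have hinj : Function.Injective f := by
    intro k k' hkk
    rcases lt_trichotomy k.val k'.val with h | h | h
    · exact absurd (key k k' hkk h) (by simp)
    · exact Fin.ext h
    · exact absurd (key k' k hkk.symm h) (by simp)
  have hbij : Function.Bijective f := Finite.injective_iff_bijective.1 hinj
  set u : Equiv.Perm (Fin (m+1)) := Equiv.ofBijective f hbij with hudef
  have hu0 : u 0 = 0 := by
    show f 0 = 0
    simp [hfdef]
  have hwn : (w ^ (m+1)) 0 = 0 := by
    obtain ⟨k, hk⟩ := hbij.2 ((w ^ (m+1)) 0)
    rcases Nat.eq_zero_or_pos k.val with h0 | hpos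
    · have hfk0 : f k = 0 := by simp [hfdef, h0]
      rw [← hk]
      exact hfk0
    · exfalso
      have hsplit : (w ^ (m+1)) 0 = (w ^ (m+1-k.val)) ((w ^ (k.val)) 0) := by
        rw [← Equiv.Perm.mul_apply, ← pow_add]
        congr 2
        omega
      have hk' : (w ^ (k.val)) 0 = (w ^ (m+1)) 0 := hk
      rw [hsplit] at hk'
      have hcomm : (w ^ (m+1-k.val)) ((w ^ (k.val)) 0)
          = (w ^ (k.val)) ((w ^ (m+1-k.val)) 0) := by
        rw [← Equiv.Perm.mul_apply, ← Equiv.Perm.mul_apply, ← pow_add, ← pow_add]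
        have he : m + 1 - k.val + k.val = k.val + (m + 1 - k.val) := by omega
        rw [he]
      rw [hcomm] at hk'
      have hfix0 : (w ^ (m+1-k.val)) 0 = 0 := (Equiv.injective _) hk'.symm
      exact no_small_period w hw (by omega) (by omega) hfix0
  refine ⟨u, hu0, ?_⟩
  apply Equiv.ext
  intro j
  have hfk : (w ^ ((u⁻¹ j).val)) 0 = j := Equiv.apply_symm_apply u j
  simp only [Equiv.Perm.mul_apply]
  show u ((finRotate (m+1)) (u⁻¹ j)) = w j
  rw [finRotate_succ_apply]
  show (w ^ (((u⁻¹ j) + 1 : Fin (m+1)).val)) 0 = w j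
  have hval : ((u⁻¹ j) + 1 : Fin (m+1)).val = ((u⁻¹ j).val + 1) % (m+1) := by
    rw [Fin.add_def]
    simp [Nat.add_mod]
  rw [hval, pow_mod_fix w hwn, pow_succ', Equiv.Perm.mul_apply, hfk]

lemma card_fix_zero (m : ℕ) :
    (Finset.univ.filter (fun u : Equiv.Perm (Fin (m+1)) => u 0 = 0)).card = m.factorial := by
  classical
  rw [← Fintype.card_subtype]
  have e1 : {u : Equiv.Perm (Fin (m+1)) // u 0 = 0}
      ≃ {pe : Fin (m+1) × Equiv.Perm (Fin m) // pe.1 = 0} := by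
    apply Equiv.subtypeEquiv Equiv.Perm.decomposeFin
    intro u
    have h : u 0 = (Equiv.Perm.decomposeFin u).1 := by
      conv_lhs => rw [← Equiv.symm_apply_apply Equiv.Perm.decomposeFin u]
      rw [← Prod.mk.eta (p := Equiv.Perm.decomposeFin u),
        Equiv.Perm.decomposeFin_symm_apply_zero]
    rw [h]
  have e2 : {pe : Fin (m+1) × Equiv.Perm (Fin m) // pe.1 = 0} ≃ Equiv.Perm (Fin m) :=
    { toFun := fun x => x.1.2
      invFun := fun e => ⟨(0, e), rfl⟩
      left_inv := by
        rintro ⟨⟨p, e⟩, hp⟩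
        simp only at hp
        subst hp
        rfl
      right_inv := fun e => rfl }
  rw [Fintype.card_congr (e1.trans e2), Fintype.card_perm, Fintype.card_fin]

lemma sgn_conj_rot (m : ℕ) (u : Equiv.Perm (Fin (m+1))) :
    sgnChar (m+1) (u * finRotate (m+1) * u⁻¹) = (-1 : K) ^ m := by
  unfold sgnChar
  rw [map_mul, map_mul, map_inv]
  rw [mul_comm (Equiv.Perm.sign u * Equiv.Perm.sign (finRotate (m+1)))]
  rw [← mul_assoc, inv_mul_cancel, one_mul, sign_finRotate]
  push_cast
  ring


/-- the elliptic fake degree of the sign character of S_n equals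
(1-q)^n/(1-q^n); here F_[π] = ((q-1)^{n-1}/n!) Σ_w π(w) det_E(1-w)/det_E(1-qw),
an identity in ℚ(q) with q = X. -/
theorem statement3 (n : ℕ) (hn : 1 ≤ n) :
    ((RatFunc.X : K) - 1) ^ (n - 1) * ((n.factorial : K))⁻¹ *
      ∑ w : Equiv.Perm (Fin n), sgnChar n w * detE n 1 w / detE n RatFunc.X w
    = (1 - (RatFunc.X : K)) ^ n / (1 - (RatFunc.X : K) ^ n) := by
  classical
  obtain ⟨m, rfl⟩ : ∃ m, n = m + 1 := ⟨n - 1, by omega⟩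
  haveI : CharZero K := charZero_of_injective_algebraMap (algebraMap ℚ K).injective
  set pX : K := ∑ i ∈ Finset.range (m+1), (RatFunc.X : K) ^ i with hpX
  have hXpow : (RatFunc.X : K) ^ (m+1) ≠ 1 := by
    intro h
    have h2 : algebraMap (Polynomial ℚ) K ((Polynomial.X : Polynomial ℚ) ^ (m+1))
        = algebraMap (Polynomial ℚ) K 1 := by
      rw [map_pow, map_one]
      exact h
    have h3 := RatFunc.algebraMap_injective ℚ h2
    have h4 := congrArg Polynomial.natDegree h3
    rw [Polynomial.natDegree_X_pow, Polynomial.natDegree_one] at h4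
    omega
  have hgeom : (1 - (RatFunc.X : K)) * pX = 1 - (RatFunc.X : K) ^ (m+1) := by
    have hg := geom_sum_mul (RatFunc.X : K) (m+1)
    rw [hpX]
    linear_combination -hg
  have hpXne : pX ≠ 0 := by
    intro h0
    rw [h0, mul_zero] at hgeom
    exact hXpow (by linear_combination hgeom)
  have h1X : (1 : K) - RatFunc.X ≠ 0 := by
    intro h0
    have hx1 : (RatFunc.X : K) = 1 := by linear_combination -h0
    exact hXpow (by rw [hx1, one_pow])
  set A := Finset.univ.filter
    (fun w : Equiv.Perm (Fin (m+1)) => ∀ j, w.SameCycle 0 j) with hA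
  set B := Finset.univ.filter (fun u : Equiv.Perm (Fin (m+1)) => u 0 = 0) with hB
  set T : K := (-1 : K) ^ m * (((m+1 : ℕ)) : K) / pX with hT
  -- restrict the sum to A
  have hsum1 : ∑ w : Equiv.Perm (Fin (m+1)),
      sgnChar (m+1) w * detE (m+1) 1 w / detE (m+1) RatFunc.X w
      = ∑ w ∈ A, sgnChar (m+1) w * detE (m+1) 1 w / detE (m+1) RatFunc.X w := by
    symm
    apply Finset.sum_subset (Finset.subset_univ A)
    intro w _ hwA
    have : ∃ j, ¬ w.SameCycle 0 j := by
      by_contra hcon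
      push_neg at hcon
      exact hwA (Finset.mem_filter.2 ⟨Finset.mem_univ w, hcon⟩)
    obtain ⟨j0, hj0⟩ := this
    rw [detE_one_zero m w j0 hj0, mul_zero, zero_div]
  -- each term on A equals T
  have hterm : ∀ w ∈ A, sgnChar (m+1) w * detE (m+1) 1 w / detE (m+1) RatFunc.X w = T := by
    intro w hw
    have hwP : ∀ j, w.SameCycle 0 j := (Finset.mem_filter.1 hw).2
    obtain ⟨u, hu0, hconj⟩ := exists_conj m w hwP
    rw [← hconj, sgn_conj_rot, detE_conj, detE_conj, detE_rot_one, detE_rot_X, hT, hpX]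
  have hsum2 : ∑ w ∈ A, sgnChar (m+1) w * detE (m+1) 1 w / detE (m+1) RatFunc.X w
      = (A.card : K) * T := by
    rw [Finset.sum_congr rfl hterm, Finset.sum_const, nsmul_eq_mul]
  -- card A
  have hcardA : A.card = m.factorial := by
    rw [← card_fix_zero m, ← hB]
    symm
    apply Finset.card_bij (fun u _ => u * finRotate (m+1) * u⁻¹)
    · intro u hu
      have hu0 : u 0 = 0 := (Finset.mem_filter.1 hu).2
      exact Finset.mem_filter.2 ⟨Finset.mem_univ _, sameCycle_conj_rot m u hu0⟩
    · intro u hu u' hu' h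
      exact conj_rot_inj m (Finset.mem_filter.1 hu).2 (Finset.mem_filter.1 hu').2 h
    · intro w hw
      obtain ⟨u, hu0, hconj⟩ := exists_conj m w (Finset.mem_filter.1 hw).2
      exact ⟨u, Finset.mem_filter.2 ⟨Finset.mem_univ _, hu0⟩, hconj⟩
  rw [hsum1, hsum2, hcardA, hT]
  -- final algebra
  have hfact : (((m+1).factorial : K)) = ((m+1 : ℕ) : K) * (m.factorial : K) := by
    rw [Nat.factorial_succ]
    push_cast
    ring
  have hfm : ((m.factorial : ℕ) : K) ≠ 0 := by
    rw [Nat.cast_ne_zero]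
    exact Nat.factorial_ne_zero m
  have hfm1 : (((m+1).factorial : ℕ) : K) ≠ 0 := by
    rw [Nat.cast_ne_zero]
    exact Nat.factorial_ne_zero (m+1)
  have hsign : ((RatFunc.X : K) - 1) ^ (m + 1 - 1) * (-1 : K) ^ m = (1 - RatFunc.X) ^ m := by
    rw [show m + 1 - 1 = m from rfl, ← mul_pow]
    congr 1
    ring
  rw [← hgeom]
  rw [show m + 1 - 1 = m from rfl]
  have hone : ((((m+1).factorial : K)))⁻¹ * ((m.factorial : K) * (((m+1:ℕ)):K)) = 1 := by
    rw [hfact]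
    have hm0 : ((m:K) + 1) ≠ 0 := by
      have h5 : (((m+1:ℕ)):K) ≠ 0 := by rw [Nat.cast_ne_zero]; omega
      push_cast at h5
      exact h5
    field_simp
  calc ((RatFunc.X : K) - 1) ^ m * (((m+1).factorial : K))⁻¹ *
        ((m.factorial : K) * ((-1:K) ^ m * (((m+1 : ℕ)) : K) / pX))
      = (((RatFunc.X : K) - 1) * (-1)) ^ m *
          ((((m+1).factorial : K))⁻¹ * ((m.factorial : K) * (((m+1 : ℕ)) : K))) / pX := by
        rw [mul_pow]
        ring
    _ = (1 - (RatFunc.X : K)) ^ m / pX := by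
        rw [show ((RatFunc.X : K) - 1) * (-1) = 1 - RatFunc.X from by ring, hone, mul_one]
    _ = (1 - (RatFunc.X : K)) ^ (m+1) / ((1 - (RatFunc.X : K)) * pX) := by
        rw [div_eq_div_iff hpXne (mul_ne_zero h1X hpXne)]
        ring
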